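/- arXiv:1902.09620 — 7 statements merged into one kernel-verified Lean document; each statement's English description precedes it below -/
import Mathlib

section
/- Let F be a field with char(F) ≠ 2 and G a group with involution * extended to FG. If FG is normal, then g² is central in G for every g ∈ G. -/
/-- The F-linear extension of a group involution `st` to the group algebra. -/
noncomputable def invMap {F G : Type*} [Field F] [Group G] (st : G → G) :
    MonoidAlgebra F G → MonoidAlgebra F G :=
  fun α => MonoidAlgebra.mapDomain st α

lemma aux0 {F G : Type*} [Field F] [Group G] (st : G → G)
    (hnormal : ∀ α : MonoidAlgebra F G, α * invMap st α = invMap st α * α) :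
    ∀ x : G, x * st x = st x * x := by
  intro x
  have h := hnormal (MonoidAlgebra.single x 1)
  simp only [invMap, MonoidAlgebra.mapDomain_single, MonoidAlgebra.single_mul_single, mul_one] at h
  exact MonoidAlgebra.single_left_injective (one_ne_zero (α := F)) h

lemma auxQ {F G : Type*} [Field F] [Group G] (h2 : (2 : F) ≠ 0) (st : G → G)
    (hnormal : ∀ α : MonoidAlgebra F G, α * invMap st α = invMap st α * α) :
    ∀ x y : G, x * st y = st x * y ∨ x * st y = st y * x := by
  intro x y
  by_contra hcon
  push_neg at hcon
  obtain ⟨ha, hb⟩ := hcon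
  have ha' : st x * y ≠ x * st y := fun e => ha e.symm
  have hb' : st y * x ≠ x * st y := fun e => hb e.symm
  have hq0 := aux0 st hnormal
  have h := hnormal (MonoidAlgebra.single x 1 + MonoidAlgebra.single y 1)
  rw [show invMap st (MonoidAlgebra.single x 1 + MonoidAlgebra.single y 1)
        = MonoidAlgebra.single (st x) (1:F) + MonoidAlgebra.single (st y) 1 from by
      rw [invMap, MonoidAlgebra.mapDomain_add, MonoidAlgebra.mapDomain_single, MonoidAlgebra.mapDomain_single]] at h
  simp only [mul_add, add_mul, MonoidAlgebra.single_mul_single, mul_one] at h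
  have h' : (Finsupp.single (x * st x) (1:F) + Finsupp.single (y * st x) 1 +
      (Finsupp.single (x * st y) 1 + Finsupp.single (y * st y) 1) : G →₀ F) =
      (Finsupp.single (st x * x) 1 + Finsupp.single (st y * x) 1 +
      (Finsupp.single (st x * y) 1 + Finsupp.single (st y * y) 1) : G →₀ F) := congrArg MonoidAlgebra.coeff h
  have hp := Finsupp.ext_iff.mp h' (x * st y)
  classical
  simp only [Finsupp.add_apply, Finsupp.single_apply, if_neg ha', if_neg hb'] at hp
  rw [← hq0 x, ← hq0 y] at hp
  split_ifs at hp <;>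
    first
      | exact h2 (by linear_combination hp)
      | exact one_ne_zero (α := F) (by linear_combination hp)

theorem stmt_1 {F G : Type*} [Field F] [Group G] (h2 : (2 : F) ≠ 0)
    (st : G → G) (hanti : ∀ g h : G, st (g * h) = st h * st g)
    (hinvol : ∀ g : G, st (st g) = g)
    (hnormal : ∀ α : MonoidAlgebra F G, α * invMap st α = invMap st α * α) :
    ∀ g : G, g ^ 2 ∈ Subgroup.center G := by
  have hq0 := aux0 st hnormal
  have hQ := auxQ h2 st hnormal
  intro g
  rw [Subgroup.mem_center_iff]
  intro h
  by_cases hc : g * h = h * g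
  · have hcom : Commute g h := hc
    exact (hcom.symm.pow_right 2).eq
  · -- noncommuting case
    set s := st g with hs_def
    set t := st h with ht_def
    have hs : g * s = s * g := hq0 g
    -- R1 : g*h = s*t
    have hR1 : g * h = s * t := by
      rcases hQ g (st h) with h1 | h1
      · rw [hinvol h] at h1; exact h1
      · rw [hinvol h] at h1; exact absurd h1 hc
    -- R2 : (g*h)*g = (t*s)*s
    have hR2 : g * h * g = t * s * s := by
      rcases hQ (g * h) (st g) with h1 | h1
      · rw [hinvol g, hanti g h] at h1; exact h1
      · rw [hinvol g] at h1
        exfalso; apply hc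
        have : g * (h * g) = g * (g * h) := by
          rw [← mul_assoc]; exact h1
        exact (mul_left_cancel this).symm
    -- E : (g*h)*h = (t*s)*t
    have hE : g * h * h = t * s * t := by
      rcases hQ (g * h) (st h) with h1 | h1
      · rw [hinvol h, hanti g h] at h1; exact h1
      · rw [hinvol h] at h1
        exfalso; apply hc
        have : (g * h) * h = (h * g) * h := by rw [h1]; group
        exact mul_right_cancel this
    have ht : s * t = g * h := hR1.symm
    -- e1 : s * (g*h*h) = (g*h)*(g*h)
    have e1 : s * (g * h * h) = (g * h) * (g * h) := by
      rw [hE, show s * (t * s * t) = (s * t) * (s * t) from by group, ht]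
    -- e2 : s * (g*h) = (g*h)*g
    have e2 : s * (g * h) = (g * h) * g := by
      apply mul_right_cancel (b := h)
      rw [show s * (g * h) * h = s * (g * h * h) from by group, e1]; group
    -- e3 : s * h = h * g
    have e3 : s * h = h * g := by
      apply mul_left_cancel (a := g)
      calc g * (s * h) = (g * s) * h := by group
        _ = (s * g) * h := by rw [hs]
        _ = s * (g * h) := by group
        _ = (g * h) * g := e2
        _ = g * (h * g) := by group
    -- e4 : g*g = s*s
    have e4 : g * g = s * s := by
      apply mul_left_cancel (a := g * h)
      calc (g * h) * (g * g) = g * ((h * g) * g) := by group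
        _ = g * ((s * h) * g) := by rw [e3]
        _ = (g * s) * (h * g) := by group
        _ = (s * g) * (h * g) := by rw [hs]
        _ = s * (g * (h * g)) := by group
        _ = s * ((g * h) * g) := by group
        _ = s * (t * s * s) := by rw [hR2]
        _ = (s * t) * (s * s) := by group
        _ = (g * h) * (s * s) := by rw [ht]
    calc h * g ^ 2 = h * (g * g) := by rw [pow_two]
      _ = (h * g) * g := by group
      _ = (s * h) * g := by rw [e3]
      _ = s * (h * g) := by group
      _ = s * (s * h) := by rw [e3]
      _ = (s * s) * h := by group
      _ = (g * g) * h := by rw [e4]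
      _ = g ^ 2 * h := by rw [pow_two]
end

section
/- Let F be a field with char(F) ≠ 2 and G a group with involution * extended to FG. If FG is normal, then every symmetric group element is central: G⁺ = {g ∈ G : g* = g} ⊆ ζ(G). In particular gg* = g*g is central for every g ∈ G. -/
lemma aux1 {F G : Type*} [Field F] [Group G] (st : G → G)
    (hnormal : ∀ α : MonoidAlgebra F G, α * invMap st α = invMap st α * α)
    (h : G) : h * st h = st h * h := by
  have key := hnormal (MonoidAlgebra.single h 1)
  simp only [invMap, MonoidAlgebra.mapDomain_single] at key
  rw [MonoidAlgebra.single_mul_single, MonoidAlgebra.single_mul_single, one_mul] at key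
  rcases MonoidAlgebra.single_inj.mp key with ⟨h1, _⟩ | ⟨h1, _⟩
  · exact h1
  · exact absurd h1 (by norm_num)

lemma aux2 {F G : Type*} [Field F] [Group G] (h2 : (2 : F) ≠ 0)
    (st : G → G) (hanti : ∀ g h : G, st (g * h) = st h * st g)
    (hinvol : ∀ g : G, st (st g) = g)
    (hnormal : ∀ α : MonoidAlgebra F G, α * invMap st α = invMap st α * α)
    (g h : G) (hg : st g = g) (hh : st h ≠ h) : g * h = h * g := by
  by_contra hc
  have key := hnormal (MonoidAlgebra.single g 1 + MonoidAlgebra.single h 1)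
  have hmap : invMap (F := F) st (MonoidAlgebra.single g 1 + MonoidAlgebra.single h 1)
      = MonoidAlgebra.single g 1 + MonoidAlgebra.single (st h) 1 := by
    show MonoidAlgebra.mapDomain st _ = _
    erw [MonoidAlgebra.mapDomain_add, MonoidAlgebra.mapDomain_single, MonoidAlgebra.mapDomain_single, hg]
  rw [hmap] at key
  simp only [add_mul, mul_add, MonoidAlgebra.single_mul_single, one_mul] at key
  have key' : (Finsupp.single (g * g) (1:F) + Finsupp.single (h * g) 1 +
      (Finsupp.single (g * st h) 1 + Finsupp.single (h * st h) 1) : G →₀ F) =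
    (Finsupp.single (g * g) 1 + Finsupp.single (st h * g) 1 +
      (Finsupp.single (g * h) 1 + Finsupp.single (st h * h) 1) : G →₀ F) := congrArg MonoidAlgebra.coeff key
  have heval := DFunLike.congr_fun key' (h * g)
  have hA : g * g ≠ h * g := fun e => hh ((mul_right_cancel e) ▸ hg)
  have hB : h * st h ≠ h * g := by
    intro e
    have e1 : st h = g := mul_left_cancel e
    have e2 : h = g := by rw [← hinvol h, e1, hg]
    exact hh (e1.trans e2.symm)
  have hB' : st h * h ≠ h * g := by
    rw [← aux1 st hnormal h]; exact hB
  have hE : st h * g ≠ h * g := fun e => hh (mul_right_cancel e)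
  simp only [Finsupp.add_apply] at heval
  rw [Finsupp.single_eq_of_ne' hA, Finsupp.single_eq_of_ne' hB, Finsupp.single_eq_of_ne' hB',
    Finsupp.single_eq_of_ne' hc, Finsupp.single_eq_of_ne' hE] at heval
  by_cases hX : g * st h = h * g
  · rw [hX, Finsupp.single_eq_same] at heval
    simp only [Finsupp.single_eq_same, zero_add, add_zero] at heval
    exact h2 (by rw [← one_add_one_eq_two]; exact heval)
  · rw [Finsupp.single_eq_of_ne' hX] at heval
    simp only [Finsupp.single_eq_same, zero_add, add_zero] at heval
    exact one_ne_zero heval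

theorem stmt_2 {F G : Type*} [Field F] [Group G] (h2 : (2 : F) ≠ 0)
    (st : G → G) (hanti : ∀ g h : G, st (g * h) = st h * st g)
    (hinvol : ∀ g : G, st (st g) = g)
    (hnormal : ∀ α : MonoidAlgebra F G, α * invMap st α = invMap st α * α) :
    (∀ g : G, st g = g → g ∈ Subgroup.center G) ∧
      (∀ g : G, g * st g = st g * g ∧ g * st g ∈ Subgroup.center G) := by
  have L2 := aux2 h2 st hanti hinvol hnormal
  have center : ∀ g : G, st g = g → g ∈ Subgroup.center G := by
    intro g hg
    rw [Subgroup.mem_center_iff]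
    intro h
    by_cases hh : st h = h
    · by_contra hc
      have hns : st (g * h) ≠ g * h := by
        rw [hanti, hh, hg]
        exact hc
      have e := L2 g (g * h) hg hns
      rw [mul_assoc g h g] at e
      exact hc (mul_left_cancel e).symm
    · exact (L2 g h hg hh).symm
  refine ⟨center, fun g => ⟨aux1 st hnormal g, center _ ?_⟩⟩
  rw [hanti, hinvol]
end

section
/- Let F be a field with char(F) ≠ 2 and G a non-abelian group with involution * extended to FG. If FG is normal, then G has a unique non-identity commutator s, which is central of order 2, and for every non-central g ∈ G one has g* = sg. -/
theorem pair_eq {F G : Type*} [Field F] [Group G] [DecidableEq G] (h2 : (2:F) ≠ 0) {a b c d : G}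
    (h : (Finsupp.single a (1:F) + Finsupp.single b 1) = Finsupp.single c 1 + Finsupp.single d 1) :
    (a = c ∧ b = d) ∨ (a = d ∧ b = c) := by
  by_cases hac : a = c
  · subst hac
    left
    exact ⟨rfl, Finsupp.single_left_injective one_ne_zero (add_left_cancel h)⟩
  · by_cases had : a = d
    · subst had
      right
      rw [add_comm (Finsupp.single c 1)] at h
      exact ⟨rfl, Finsupp.single_left_injective one_ne_zero (add_left_cancel h)⟩
    · exfalso
      have hca : ¬ c = a := fun hh => hac hh.symm
      have hda : ¬ d = a := fun hh => had hh.symm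
      have hc := DFunLike.congr_fun h a
      rw [Finsupp.add_apply, Finsupp.add_apply, Finsupp.single_apply, Finsupp.single_apply,
        Finsupp.single_apply, Finsupp.single_apply, if_pos rfl, if_neg hca, if_neg hda] at hc
      by_cases hba : b = a
      · rw [if_pos hba] at hc
        norm_num at hc; exact h2 hc
      · rw [if_neg hba] at hc
        simp at hc

theorem stmt_3 {F G : Type*} [Field F] [Group G] (h2 : (2 : F) ≠ 0)
    (hna : ∃ g h : G, g * h ≠ h * g)
    (st : G → G) (hanti : ∀ g h : G, st (g * h) = st h * st g)
    (hinvol : ∀ g : G, st (st g) = g)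
    (hnormal : ∀ α : MonoidAlgebra F G, α * invMap st α = invMap st α * α) :
    ∃ s : G, s ≠ 1 ∧ s ∈ Subgroup.center G ∧ s * s = 1 ∧
      (∀ g h : G, g⁻¹ * h⁻¹ * g * h = 1 ∨ g⁻¹ * h⁻¹ * g * h = s) ∧
      (∃ g h : G, g⁻¹ * h⁻¹ * g * h = s) ∧
      (∀ g : G, g ∉ Subgroup.center G → st g = s * g) := by
  classical
  -- basic facts
  have hmap : ∀ g : G, invMap st (MonoidAlgebra.single g (1:F))
      = MonoidAlgebra.single (st g) (1:F) := fun g => MonoidAlgebra.mapDomain_single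
  have hA : ∀ g : G, g * st g = st g * g := by
    intro g
    have h := hnormal (MonoidAlgebra.single g (1:F))
    rw [hmap, MonoidAlgebra.single_mul_single, MonoidAlgebra.single_mul_single] at h
    exact Finsupp.single_left_injective (α := G) (b := (1:F)) one_ne_zero (by rw [mul_one] at h; exact congrArg MonoidAlgebra.coeff h)
  have bilin : ∀ a b : MonoidAlgebra F G, a * invMap st b + b * invMap st a
      = invMap st a * b + invMap st b * a := by
    intro a b
    have h1 := hnormal (a + b)
    have ha := hnormal a
    have hb := hnormal b
    have hadd : invMap st (a + b) = invMap st a + invMap st b := MonoidAlgebra.mapDomain_add _ _ _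
    rw [hadd] at h1
    set a' := invMap st a
    set b' := invMap st b
    have e1 : (a + b) * (a' + b') = (a * a' + b * b') + (a * b' + b * a') := by
      rw [add_mul, mul_add, mul_add]; abel
    have e2 : (a' + b') * (a + b) = (a' * a + b' * b) + (a' * b + b' * a) := by
      rw [add_mul, mul_add, mul_add]; abel
    rw [e1, e2, ha, hb] at h1
    exact add_left_cancel h1
  -- transfer bilin to group element pairs
  have keyPair : ∀ g h : G,
      (g * st h = st g * h ∧ h * st g = st h * g) ∨
      (g * st h = st h * g ∧ h * st g = st g * h) := by
    intro g h
    have h1 := bilin (MonoidAlgebra.single g (1:F)) (MonoidAlgebra.single h (1:F))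
    rw [hmap, hmap, MonoidAlgebra.single_mul_single, MonoidAlgebra.single_mul_single,
      MonoidAlgebra.single_mul_single, MonoidAlgebra.single_mul_single, one_mul] at h1
    exact pair_eq h2 (congrArg MonoidAlgebra.coeff h1)
  -- key lemma B : st (g*h) = h*g for non-commuting g h
  have hB : ∀ g h : G, g * h ≠ h * g → st (g * h) = h * g := by
    intro g h hgh
    rcases keyPair g (st h) with ⟨h1, h2'⟩ | ⟨h1, h2'⟩
    · -- g * st (st h) = st g * st h  i.e.  g * h = st (h * g)
      rw [hinvol] at h1
      -- h1 : g * h = st g * st h = st (h * g)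
      rw [← hanti] at h1
      -- h2' : st h * st g = st (st h) * g = h * g
      rw [hinvol, ← hanti] at h2'
      exact h2'
    · rw [hinvol] at h1
      exact absurd h1 hgh
  -- st on non-central elements
  have hstnc : ∀ x y : G, x * y ≠ y * x → st x = y⁻¹ * x * y := by
    intro x y hxy
    have hne : (x * y) * y⁻¹ ≠ y⁻¹ * (x * y) := by
      intro h
      apply hxy
      have hx : x = y⁻¹ * (x * y) := by rw [← h]; group
      nth_rewrite 2 [hx]
      group
    have := hB (x * y) y⁻¹ hne
    rw [mul_inv_cancel_right] at this
    rw [this]; group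
  -- squares commute with non-commuting partners
  have hsq : ∀ x y : G, x * y ≠ y * x → (x * x) * y = y * (x * x) := by
    intro x y hxy
    have hyx : y * x ≠ x * y := fun h => hxy h.symm
    have hx : st x = y⁻¹ * x * y := hstnc x y hxy
    have hy : st y = x⁻¹ * y * x := hstnc y x hyx
    rcases keyPair x y with ⟨h1, h2'⟩ | ⟨h1, h2'⟩
    · rw [hx, hy] at h2'
      have e : x * (x * y) = y * (x * x) := by
        calc x * (x * y) = x * (y * (y⁻¹ * x * y)) := by group
          _ = x * (x⁻¹ * y * x * x) := by rw [h2']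
          _ = y * (x * x) := by group
      rw [mul_assoc]; exact e
    · exfalso
      apply hxy
      rw [hy] at h1
      have e : (x * y) * x = (y * x) * x := by
        calc (x * y) * x = x * (x * (x⁻¹ * y * x)) := by group
          _ = x * ((x⁻¹ * y * x) * x) := by rw [h1]
          _ = (y * x) * x := by group
      exact mul_right_cancel e
  -- x commutes with x⁻¹ * st x
  have hScomm : ∀ x : G, x * (x⁻¹ * st x) = (x⁻¹ * st x) * x := by
    intro x
    have hAx := hA x
    calc x * (x⁻¹ * st x) = st x := by group
      _ = x⁻¹ * (x * st x) := by group
      _ = x⁻¹ * (st x * x) := by rw [hAx]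
      _ = (x⁻¹ * st x) * x := by group
  -- (x⁻¹ st x)² = 1 for non-central x
  have hSsq : ∀ x y : G, x * y ≠ y * x → (x⁻¹ * st x) * (x⁻¹ * st x) = 1 := by
    intro x y hxy
    have hx : st x = y⁻¹ * x * y := hstnc x y hxy
    have hq := hsq x y hxy
    have e1 : st x * st x = x * x := by
      rw [hx]
      calc (y⁻¹ * x * y) * (y⁻¹ * x * y) = y⁻¹ * ((x * x) * y) := by group
        _ = y⁻¹ * (y * (x * x)) := by rw [hq]
        _ = x * x := by group
    have e2 : st x * st x = (x * x) * ((x⁻¹ * st x) * (x⁻¹ * st x)) := by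
      calc st x * st x = x * ((x⁻¹ * st x) * x) * (x⁻¹ * st x) := by group
        _ = x * (x * (x⁻¹ * st x)) * (x⁻¹ * st x) := by rw [← hScomm x]
        _ = (x * x) * ((x⁻¹ * st x) * (x⁻¹ * st x)) := by group
    exact mul_left_cancel (a := x * x) (by rw [← e2, e1, mul_one])
  -- x⁻¹ st x is the same for all pairs of non-commuting elements
  have hSeq : ∀ x y : G, x * y ≠ y * x → x⁻¹ * st x = y⁻¹ * st y := by
    intro x y hxy
    have hyx : y * x ≠ x * y := fun h => hxy h.symm
    have hx : st x = y⁻¹ * x * y := hstnc x y hxy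
    have hy : st y = x⁻¹ * y * x := hstnc y x hyx
    have hmul : (x⁻¹ * st x) * (y⁻¹ * st y) = 1 := by rw [hx, hy]; group
    have hyy := hSsq y x hyx
    calc x⁻¹ * st x = (x⁻¹ * st x) * ((y⁻¹ * st y) * (y⁻¹ * st y)) := by rw [hyy, mul_one]
      _ = ((x⁻¹ * st x) * (y⁻¹ * st y)) * (y⁻¹ * st y) := by group
      _ = y⁻¹ * st y := by rw [hmul, one_mul]
  obtain ⟨x0, y0, hxy0⟩ := hna
  have hy0x0 : y0 * x0 ≠ x0 * y0 := fun h => hxy0 h.symm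
  have hy0S : y0⁻¹ * st y0 = x0⁻¹ * st x0 := hSeq y0 x0 hy0x0
  -- connectivity : any non-central element has the same s
  have hconn : ∀ g h : G, g * h ≠ h * g → g⁻¹ * st g = x0⁻¹ * st x0 := by
    intro g h hgh
    by_cases hgx : g * x0 = x0 * g
    · by_cases hgy : g * y0 = y0 * g
      · by_cases hhx : h * x0 = x0 * h
        · by_cases hhy : h * y0 = y0 * h
          · -- g, h commute with x0 and y0
            have hne : (g * x0) * h ≠ h * (g * x0) := by
              intro he
              apply hgh
              have e : (g * h) * x0 = (h * g) * x0 := by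
                calc (g * h) * x0 = g * (h * x0) := by group
                  _ = g * (x0 * h) := by rw [hhx]
                  _ = (g * x0) * h := by group
                  _ = h * (g * x0) := he
                  _ = (h * g) * x0 := by group
              exact mul_right_cancel e
            have hgx0ne : (g * x0) * y0 ≠ y0 * (g * x0) := by
              intro he
              apply hxy0
              have e : g * (x0 * y0) = g * (y0 * x0) := by
                calc g * (x0 * y0) = (g * x0) * y0 := by group
                  _ = y0 * (g * x0) := he
                  _ = (y0 * g) * x0 := by group
                  _ = (g * y0) * x0 := by rw [hgy]
                  _ = g * (y0 * x0) := by group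
              exact mul_left_cancel e
            exact (hSeq g h hgh).trans ((hSeq h (g * x0) (fun he => hne he.symm)).trans
              ((hSeq (g * x0) y0 hgx0ne).trans hy0S))
          · exact (hSeq g h hgh).trans ((hSeq h y0 hhy).trans hy0S)
        · exact (hSeq g h hgh).trans (hSeq h x0 hhx)
      · exact (hSeq g y0 hgy).trans hy0S
    · exact hSeq g x0 hgx
  -- centrality
  have hcen : ∀ z : G, z * (x0⁻¹ * st x0) = (x0⁻¹ * st x0) * z := by
    intro z
    by_cases hzx : z * x0 = x0 * z
    · by_cases hzy : z * y0 = y0 * z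
      · have hne : (z * x0) * y0 ≠ y0 * (z * x0) := by
          intro he
          apply hxy0
          have e : z * (x0 * y0) = z * (y0 * x0) := by
            calc z * (x0 * y0) = (z * x0) * y0 := by group
              _ = y0 * (z * x0) := he
              _ = (y0 * z) * x0 := by group
              _ = (z * y0) * x0 := by rw [hzy]
              _ = z * (y0 * x0) := by group
          exact mul_left_cancel e
        have hS : (z * x0)⁻¹ * st (z * x0) = x0⁻¹ * st x0 :=
          (hSeq (z * x0) y0 hne).trans hy0S
        have hc1 : (z * x0) * (x0⁻¹ * st x0) = (x0⁻¹ * st x0) * (z * x0) := by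
          rw [← hS]; exact hScomm (z * x0)
        have hc0 : x0 * (x0⁻¹ * st x0) = (x0⁻¹ * st x0) * x0 := hScomm x0
        have e : (z * (x0⁻¹ * st x0)) * x0 = ((x0⁻¹ * st x0) * z) * x0 := by
          calc (z * (x0⁻¹ * st x0)) * x0 = z * ((x0⁻¹ * st x0) * x0) := by group
            _ = z * (x0 * (x0⁻¹ * st x0)) := by rw [hc0]
            _ = (z * x0) * (x0⁻¹ * st x0) := by group
            _ = (x0⁻¹ * st x0) * (z * x0) := hc1
            _ = ((x0⁻¹ * st x0) * z) * x0 := by group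
        exact mul_right_cancel e
      · rw [← (hSeq z y0 hzy).trans hy0S]; exact hScomm z
    · rw [← hSeq z x0 hzx]; exact hScomm z
  refine ⟨x0⁻¹ * st x0, ?_, Subgroup.mem_center_iff.mpr hcen, hSsq x0 y0 hxy0, ?_, ?_, ?_⟩
  · -- s ≠ 1
    intro h
    apply hxy0
    have hx : st x0 = y0⁻¹ * x0 * y0 := hstnc x0 y0 hxy0
    rw [hx] at h
    have e : x0 * y0 = y0 * x0 := by
      calc x0 * y0 = (y0 * x0) * (x0⁻¹ * (y0⁻¹ * x0 * y0)) := by group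
        _ = (y0 * x0) * 1 := by rw [h]
        _ = y0 * x0 := mul_one _
    exact e
  · -- commutator dichotomy
    intro g h
    by_cases hgh : g * h = h * g
    · left
      calc g⁻¹ * h⁻¹ * g * h = g⁻¹ * h⁻¹ * (g * h) := by group
        _ = g⁻¹ * h⁻¹ * (h * g) := by rw [hgh]
        _ = 1 := by group
    · right
      have hstg : st g = h⁻¹ * g * h := hstnc g h hgh
      have hS : g⁻¹ * st g = x0⁻¹ * st x0 := hconn g h hgh
      rw [hstg] at hS
      rw [← hS]; group
  · -- existence of a non-trivial commutator
    refine ⟨x0, y0, ?_⟩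
    have hx : st x0 = y0⁻¹ * x0 * y0 := hstnc x0 y0 hxy0
    rw [hx]; group
  · -- non-central elements
    intro g hg
    simp only [Subgroup.mem_center_iff, not_forall] at hg
    obtain ⟨y, hy⟩ := hg
    have hgy : g * y ≠ y * g := fun h => hy h.symm
    have hS : g⁻¹ * st g = x0⁻¹ * st x0 := hconn g y hgy
    calc st g = g * (g⁻¹ * st g) := by group
      _ = g * (x0⁻¹ * st x0) := by rw [hS]
      _ = (x0⁻¹ * st x0) * g := hcen g
end

section
/- Let F be a field with char(F) ≠ 2, G a group with non-trivial orientation σ : G → {±1} and involution *, and ⊛ the associated oriented group involution on FG. If FG is normal with respect to ⊛ (αα⊛ = α⊛α for all α), then for g, h ∈ G: if σ(g)σ(h) = 1 then gh = hg or gh = g*h*; and if σ(g)σ(h) = −1 then gh = hg or gh = (gh)*. -/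
/-- The oriented involution on the group algebra: `(Σ α_g g)⊛ = Σ α_g σ(g) g*`. -/
noncomputable def oinvMap {F G : Type*} [Field F] [Group G] (st : G → G) (σ : G → F) :
    MonoidAlgebra F G → MonoidAlgebra F G :=
  fun α => MonoidAlgebra.ofCoeff (Finsupp.sum α.coeff fun g c => Finsupp.single (st g) (σ g * c))

lemma oinv_single {F G : Type*} [Field F] [Group G] (st : G → G) (σ : G → F) (g : G) (c : F) :
    oinvMap st σ (MonoidAlgebra.single g c) = MonoidAlgebra.single (st g) (σ g * c) := by
  unfold oinvMap
  rw [MonoidAlgebra.coeff_single, Finsupp.sum_single_index (by simp)]; rfl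

lemma oinv_add {F G : Type*} [Field F] [Group G] (st : G → G) (σ : G → F)
    (α β : MonoidAlgebra F G) :
    oinvMap st σ (α + β) = oinvMap st σ α + oinvMap st σ β := by
  unfold oinvMap
  rw [MonoidAlgebra.coeff_add, Finsupp.sum_add_index' (by simp) (by intros; simp [mul_add, Finsupp.single_add])]; rfl

theorem stmt_10 {F G : Type*} [Field F] [Group G] (h2 : (2 : F) ≠ 0)
    (st : G → G) (hanti : ∀ g h : G, st (g * h) = st h * st g)
    (hinvol : ∀ g : G, st (st g) = g)
    (σ : G → F) (hhom : ∀ g h : G, σ (g * h) = σ g * σ h)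
    (hval : ∀ g : G, σ g = 1 ∨ σ g = -1)
    (hnt : ∃ g : G, σ g = -1)
    (hker : ∀ g : G, σ (g * st g) = 1)
    (hnormal : ∀ α : MonoidAlgebra F G, α * oinvMap st σ α = oinvMap st σ α * α) :
    ∀ g h : G,
      (σ g * σ h = 1 → g * h = h * g ∨ g * h = st g * st h) ∧
      (σ g * σ h = -1 → g * h = h * g ∨ g * h = st (g * h)) := by
  classical
  -- σ never vanishes
  have hne : ∀ g : G, σ g ≠ 0 := by
    intro g
    rcases hval g with h | h <;> rw [h]
    · exact one_ne_zero
    · exact neg_ne_zero.mpr one_ne_zero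
  -- σ g * σ g = 1
  have hsq : ∀ g : G, σ g * σ g = 1 := by
    intro g
    rcases hval g with h | h <;> rw [h] <;> ring
  -- σ (st g) = σ g
  have hst : ∀ g : G, σ (st g) = σ g := by
    intro g
    have h1 : σ g * σ (st g) = 1 := by rw [← hhom]; exact hker g
    calc σ (st g) = (σ g * σ g) * σ (st g) := by rw [hsq]; ring
    _ = σ g * (σ g * σ (st g)) := by ring
    _ = σ g := by rw [h1]; ring
  -- g commutes with st g
  have hcomm : ∀ g : G, g * st g = st g * g := by
    intro g
    have := hnormal (MonoidAlgebra.single g 1)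
    rw [oinv_single, MonoidAlgebra.single_mul_single, MonoidAlgebra.single_mul_single] at this
    rcases MonoidAlgebra.single_inj.mp this with ⟨h, _⟩ | ⟨h, _⟩
    · exact h
    · exact absurd h (by simpa using hne g)
  intro g h
  -- the key identity from normality of single g 1 + single (st h) 1
  have key : MonoidAlgebra.single (g * h) (σ h) + MonoidAlgebra.single (st h * st g) (σ g)
      = MonoidAlgebra.single (st g * st h) (σ g) + MonoidAlgebra.single (h * g) (σ h) := by
    have hn := hnormal (MonoidAlgebra.single g 1 + MonoidAlgebra.single (st h) 1)
    rw [oinv_add, oinv_single, oinv_single, hinvol] at hn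
    simp only [add_mul, mul_add, MonoidAlgebra.single_mul_single, mul_one, one_mul, hst] at hn
    rw [hcomm g, ← hcomm h] at hn
    apply add_left_cancel (a := MonoidAlgebra.single (st g * g) (σ g))
    apply add_right_cancel (b := MonoidAlgebra.single (h * st h) (σ h))
    calc MonoidAlgebra.single (st g * g) (σ g) +
          (MonoidAlgebra.single (g * h) (σ h) + MonoidAlgebra.single (st h * st g) (σ g)) +
          MonoidAlgebra.single (h * st h) (σ h)
        = MonoidAlgebra.single (st g * g) (σ g) + MonoidAlgebra.single (st h * st g) (σ g) +
          (MonoidAlgebra.single (g * h) (σ h) + MonoidAlgebra.single (h * st h) (σ h)) := by abel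
      _ = MonoidAlgebra.single (st g * g) (σ g) + MonoidAlgebra.single (h * g) (σ h) +
          (MonoidAlgebra.single (st g * st h) (σ g) + MonoidAlgebra.single (h * st h) (σ h)) := hn
      _ = _ := by abel
  -- evaluate the identity at g * h
  have key' : (Finsupp.single (g * h) (σ h) + Finsupp.single (st h * st g) (σ g) : G →₀ F)
      = Finsupp.single (st g * st h) (σ g) + Finsupp.single (h * g) (σ h) := congrArg MonoidAlgebra.coeff key
  have ev := Finsupp.ext_iff.mp key' (g * h)
  simp only [Finsupp.add_apply, Finsupp.single_apply] at ev
  rw [if_pos trivial] at ev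
  -- ev : σ h + (if st h * st g = g * h then σ g else 0)
  --    = (if st g * st h = g * h then σ g else 0) + (if h * g = g * h then σ h else 0)
  constructor
  · intro hσ
    have hgh : σ g = σ h := by
      rcases hval g with e1 | e1 <;> rcases hval h with e2 | e2 <;> rw [e1, e2] <;>
        first
          | rfl
          | (rw [e1, e2] at hσ;
             exact absurd (show (2 : F) = 0 by linear_combination -hσ) h2)
    by_cases hB : st g * st h = g * h
    · exact Or.inr hB.symm
    by_cases hC : h * g = g * h
    · exact Or.inl hC.symm
    exfalso
    rw [if_neg hB, if_neg hC, add_zero, hgh] at ev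
    by_cases hA : st h * st g = g * h
    · rw [if_pos hA] at ev
      exact h2 (by linear_combination σ h * ev - 2 * hsq h)
    · rw [if_neg hA, add_zero] at ev
      exact hne h ev
  · intro hσ
    have hgh : σ g = -σ h := by
      rcases hval g with e1 | e1 <;> rcases hval h with e2 | e2 <;> rw [e1, e2] <;>
        first
          | (rw [e1, e2] at hσ;
             exact absurd (show (2 : F) = 0 by linear_combination hσ) h2)
          | norm_num
    by_cases hC : h * g = g * h
    · exact Or.inl hC.symm
    by_cases hA : st h * st g = g * h
    · right; rw [hanti]; exact hA.symm
    exfalso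
    rw [if_neg hC, if_neg hA, add_zero, add_zero, hgh] at ev
    by_cases hB : st g * st h = g * h
    · rw [if_pos hB] at ev
      exact h2 (by linear_combination σ h * ev - 2 * hsq h)
    · rw [if_neg hB] at ev
      exact hne h ev
end

section
/- Let F be a field with char(F) ≠ 2, G a non-abelian group with non-trivial orientation σ and involution *, N = ker(σ). Suppose FG is normal with respect to the oriented involution ⊛ and N is abelian. Then x* = x for all x ∈ G \ N, and n* = a⁻¹na = ana⁻¹ for all n ∈ N and all a ∈ G \ N. -/
lemma pair_ones {F G : Type*} [Field F] (h2 : (2:F) ≠ 0) {u v w x : G}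
    (h : MonoidAlgebra.single u (1:F) + MonoidAlgebra.single v 1
       = MonoidAlgebra.single w 1 + MonoidAlgebra.single x 1) :
    (u = w ∧ v = x) ∨ (u = x ∧ v = w) := by
  classical
  have hp : ∀ t : G, (if u = t then (1:F) else 0) + (if v = t then 1 else 0)
      = (if w = t then 1 else 0) + (if x = t then 1 else 0) := by
    intro t
    have := congrArg (fun y => MonoidAlgebra.coeff y t) h
    simpa [Finsupp.single_apply] using this
  have h20 : (1:F) + 1 ≠ 0 := by rwa [one_add_one_eq_two]
  have h12 : (1:F) ≠ 1 + 1 := by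
    intro hc
    exact one_ne_zero ((add_right_cancel (a := (0:F)) (b := 1) (c := 1)
      (by rw [zero_add]; exact hc)).symm)
  by_cases huw : u = w
  · left
    refine ⟨huw, ?_⟩
    subst huw
    have h1 := hp v
    rw [if_pos rfl] at h1
    have h1' := add_left_cancel h1
    by_cases hxv : x = v
    · exact hxv.symm
    · rw [if_neg hxv] at h1'; exact absurd h1' one_ne_zero
  · have h1 := hp w
    rw [if_neg huw, if_pos rfl, zero_add] at h1
    by_cases hvw : v = w
    · rw [if_pos hvw] at h1
      have hxw : ¬ x = w := by
        intro hxw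
        rw [if_pos hxw] at h1
        exact h12 h1
      rw [if_neg hxw, add_zero] at h1
      have h3 := hp u
      rw [if_pos rfl, if_neg (fun hh : w = u => huw hh.symm), zero_add] at h3
      by_cases hvu : v = u
      · rw [if_pos hvu] at h3
        by_cases hxu : x = u
        · rw [if_pos hxu] at h3; exact absurd h3.symm h12
        · rw [if_neg hxu] at h3; exact absurd h3 h20
      · rw [if_neg hvu, add_zero] at h3
        by_cases hxu : x = u
        · exact Or.inr ⟨hxu.symm, hvw⟩
        · rw [if_neg hxu] at h3; exact absurd h3 one_ne_zero
    · rw [if_neg hvw] at h1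
      by_cases hxw : x = w
      · rw [if_pos hxw] at h1; exact absurd h1.symm h20
      · rw [if_neg hxw, add_zero] at h1; exact absurd h1.symm one_ne_zero

lemma pair_mixed {F G : Type*} [Field F] (h2 : (2:F) ≠ 0) {u v w x : G}
    (h : MonoidAlgebra.single u (1:F) + MonoidAlgebra.single v (-1)
       = MonoidAlgebra.single w 1 + MonoidAlgebra.single x (-1)) :
    (u = w ∧ v = x) ∨ (u = v ∧ w = x) := by
  classical
  have hp : ∀ t : G, (if u = t then (1:F) else 0) + -(if v = t then 1 else 0)
      = (if w = t then 1 else 0) + -(if x = t then 1 else 0) := by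
    intro t
    have := congrArg (fun y => MonoidAlgebra.coeff y t) h
    simpa [Finsupp.single_apply] using this
  have hn1 : (1:F) ≠ -1 := by
    intro hc
    apply h2
    rw [← one_add_one_eq_two]
    nth_rewrite 2 [hc]
    simp
  have h10 : (1:F) ≠ 0 := one_ne_zero
  by_cases huv : u = v
  · right
    refine ⟨huv, ?_⟩
    subst huv
    have h1 := hp w
    rw [if_pos rfl] at h1
    by_cases hxw : x = w
    · exact hxw.symm
    · rw [if_neg hxw] at h1
      by_cases huw : u = w
      · rw [if_pos huw] at h1; simp at h1
      · rw [if_neg huw] at h1; simp at h1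
  · left
    have h1 := hp u
    rw [if_pos rfl, if_neg (fun hh : v = u => huv hh.symm), neg_zero, add_zero] at h1
    have huw : w = u ∧ ¬ x = u := by
      by_cases hwu : w = u <;> by_cases hxu : x = u
      · rw [if_pos hwu, if_pos hxu] at h1; simp at h1
      · exact ⟨hwu, hxu⟩
      · rw [if_neg hwu, if_pos hxu, zero_add] at h1
        exact absurd h1 hn1
      · rw [if_neg hwu, if_neg hxu] at h1; simp at h1
    have h3 := hp v
    rw [if_neg huv, if_pos rfl, zero_add] at h3
    rw [if_neg (fun hh : w = v => huv (huw.1 ▸ hh))] at h3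
    by_cases hxv : x = v
    · exact ⟨huw.1.symm, hxv.symm⟩
    · rw [if_neg hxv] at h3; simp at h3

theorem stmt_13 {F G : Type*} [Field F] [Group G] (h2 : (2 : F) ≠ 0)
    (hna : ∃ g h : G, g * h ≠ h * g)
    (st : G → G) (hanti : ∀ g h : G, st (g * h) = st h * st g)
    (hinvol : ∀ g : G, st (st g) = g)
    (σ : G → F) (hhom : ∀ g h : G, σ (g * h) = σ g * σ h)
    (hval : ∀ g : G, σ g = 1 ∨ σ g = -1)
    (hnt : ∃ g : G, σ g = -1)
    (hker : ∀ g : G, σ (g * st g) = 1)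
    (hnormal : ∀ α : MonoidAlgebra F G, α * oinvMap st σ α = oinvMap st σ α * α)
    (habN : ∀ m n : G, σ m = 1 → σ n = 1 → m * n = n * m) :
    (∀ x : G, σ x = -1 → st x = x) ∧
      (∀ n a : G, σ n = 1 → σ a = -1 → st n = a⁻¹ * n * a ∧ st n = a * n * a⁻¹) := by
  classical
  obtain ⟨g0, h0, hg0⟩ := hna
  have hn1 : (1:F) ≠ -1 := by
    intro hc
    apply h2
    rw [← one_add_one_eq_two]
    nth_rewrite 2 [hc]
    simp
  have hσne : ∀ g : G, σ g ≠ 0 := by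
    intro g
    rcases hval g with h | h <;> rw [h]
    · exact one_ne_zero
    · exact neg_ne_zero.mpr one_ne_zero
  have hone : σ 1 = 1 := by
    rcases hval 1 with h | h
    · exact h
    · have hx := hhom 1 1
      rw [one_mul, h, neg_mul_neg, one_mul] at hx
      exact absurd hx.symm hn1
  have aux : ∀ g x : G, σ g * σ x = 1 → σ x = σ g := by
    intro g x hgx
    rcases hval g with h | h <;> rcases hval x with h' | h' <;> rw [h, h'] at hgx ⊢
    · rw [one_mul] at hgx; exact hgx
    · rw [mul_one] at hgx; exact hgx.symm
  have hσst : ∀ g : G, σ (st g) = σ g := by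
    intro g
    apply aux
    rw [← hhom]
    exact hker g
  have hσinv : ∀ g : G, σ g⁻¹ = σ g := by
    intro g
    apply aux
    rw [← hhom, mul_inv_cancel]
    exact hone
  have comm1 : ∀ g : G, g * st g = st g * g := by
    intro g
    have hn := hnormal (MonoidAlgebra.single g 1)
    rw [oinv_single, mul_one, MonoidAlgebra.single_mul_single,
      MonoidAlgebra.single_mul_single] at hn
    rw [MonoidAlgebra.single_inj] at hn
    rcases hn with ⟨h1, _⟩ | ⟨h1, _⟩
    · exact h1
    · exact absurd h1 (by simpa using hσne g)
  have key : ∀ g h : G,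
      (MonoidAlgebra.single (g * st h) (σ h) + MonoidAlgebra.single (h * st g) (σ g)
        : MonoidAlgebra F G)
      = MonoidAlgebra.single (st g * h) (σ g) + MonoidAlgebra.single (st h * g) (σ h) := by
    intro g h
    have hn := hnormal (MonoidAlgebra.single g 1 + MonoidAlgebra.single h 1)
    rw [oinv_add, oinv_single, oinv_single, mul_one, mul_one] at hn
    simp only [mul_add, add_mul, MonoidAlgebra.single_mul_single, one_mul, mul_one] at hn
    rw [comm1 g, comm1 h] at hn
    rw [← sub_eq_zero]
    exact Eq.trans (by abel) (sub_eq_zero_of_eq hn)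
  have mix : ∀ n a : G, σ n = 1 → σ a = -1 →
      (a * st n = st n * a ∧ n * st a = st a * n) ∨
      (a * st n = n * st a ∧ st n * a = st a * n) := by
    intro n a hn ha
    have h := key n a
    rw [hn, ha] at h
    rw [add_comm (MonoidAlgebra.single (n * st a) (-1:F)) (MonoidAlgebra.single (a * st n) (1:F))] at h
    exact pair_mixed h2 h
  have same : ∀ b c : G, σ b = -1 → σ c = -1 →
      (b * st c = st b * c ∧ c * st b = st c * b) ∨
      (b * st c = st c * b ∧ c * st b = st b * c) := by
    intro b c hb hc
    have h := key b c
    rw [hb, hc] at h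
    have h' : (MonoidAlgebra.single (c * st b) (1:F) + MonoidAlgebra.single (b * st c) 1
        : MonoidAlgebra F G)
        = MonoidAlgebra.single (st c * b) 1 + MonoidAlgebra.single (st b * c) 1 := by
      have hneg := congrArg (fun y : MonoidAlgebra F G => -y) h
      simpa [neg_add, MonoidAlgebra.single_neg, neg_neg] using hneg
    rcases pair_ones h2 h' with ⟨p, q⟩ | ⟨p, q⟩
    · exact Or.inl ⟨q, p⟩
    · exact Or.inr ⟨q, p⟩
  have stfix : ∀ a : G, σ a = -1 → st a = a := by
    intro a ha
    by_contra hne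
    set z : G := a⁻¹ * st a with hzdef
    have hza : st a = a * z := by rw [hzdef]; group
    have hσz : σ z = 1 := by
      rw [hzdef, hhom, hσinv a, hσst a, ha]
      norm_num
    have hz1 : z ≠ 1 := by
      intro h
      exact hne (by rw [hza, h, mul_one])
    have hcommaz : a * z = z * a := by
      have h := comm1 a
      rw [hza] at h
      have h' : a * (a * z) = a * (z * a) := by rw [h]; group
      exact mul_left_cancel h'
    have hcomm : ∀ n : G, σ n = 1 → a * n = n * a := by
      intro n hnn
      have hzn : z * n = n * z := habN z n hσz hnn
      have hσan : σ (a * n) = -1 := by rw [hhom, ha, hnn, mul_one]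
      have hs := same a (a * n) ha hσan
      rw [hanti] at hs
      rw [hza] at hs
      have hm := mix n a hnn ha
      rw [hza] at hm
      rcases hm with ⟨_, hm2⟩ | ⟨_, hm2'⟩
      · -- hm2 : n * (a * z) = a * z * n
        have e1 : (n * a) * z = (a * n) * z := by
          calc (n * a) * z = n * (a * z) := by group
            _ = a * z * n := hm2
            _ = a * (z * n) := by group
            _ = a * (n * z) := by rw [hzn]
            _ = (a * n) * z := by group
        exact (mul_right_cancel e1).symm
      · rcases hs with ⟨hs1, _⟩ | ⟨_, hs2⟩
        · -- hs1 : a * (st n * (a * z)) = a * z * (a * n), hm2' : st n * a = a * z * n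
          exfalso
          have e1 : a * st n * a * z = a * a * n * z := by
            calc a * st n * a * z = a * (st n * (a * z)) := by group
              _ = a * z * (a * n) := hs1
              _ = a * ((z * a) * n) := by group
              _ = a * ((a * z) * n) := by rw [hcommaz]
              _ = a * a * (z * n) := by group
              _ = a * a * (n * z) := by rw [hzn]
              _ = a * a * n * z := by group
          have e3 := mul_right_cancel e1
          rw [mul_assoc, mul_assoc] at e3
          have e2 : st n * a = a * n := mul_left_cancel e3
          have eC : st n * a = (a * n) * z := by
            calc st n * a = a * z * n := hm2'
              _ = a * (z * n) := by group
              _ = a * (n * z) := by rw [hzn]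
              _ = (a * n) * z := by group
          have e4 : a * n = (a * n) * z := e2.symm.trans eC
          have e5 : (a * n) * 1 = (a * n) * z := by rw [mul_one]; exact e4
          exact hz1 (mul_left_cancel e5).symm
        · -- hs2 : (a * n) * (a * z) = a * z * (a * n)
          have e1 : a * (n * a) * z = a * (a * n) * z := by
            calc a * (n * a) * z = (a * n) * (a * z) := by group
              _ = a * z * (a * n) := hs2
              _ = a * ((z * a) * n) := by group
              _ = a * ((a * z) * n) := by rw [hcommaz]
              _ = a * (a * (z * n)) := by group
              _ = a * (a * (n * z)) := by rw [hzn]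
              _ = a * (a * n) * z := by group
          have e3 := mul_right_cancel e1
          exact (mul_left_cancel e3).symm
    have key2 : ∀ g : G, σ g = -1 → ∀ m : G, σ m = 1 → g * m = m * g := by
      intro g hg m hm
      have hp : σ (a⁻¹ * g) = 1 := by
        rw [hhom, hσinv a, ha, hg]; norm_num
      have hgp : g = a * (a⁻¹ * g) := by group
      rw [hgp]
      calc a * (a⁻¹ * g) * m = a * ((a⁻¹ * g) * m) := by group
        _ = a * (m * (a⁻¹ * g)) := by rw [habN (a⁻¹ * g) m hp hm]
        _ = (a * m) * (a⁻¹ * g) := by group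
        _ = (m * a) * (a⁻¹ * g) := by rw [hcomm m hm]
        _ = m * (a * (a⁻¹ * g)) := by group
    have hall : ∀ g h : G, g * h = h * g := by
      intro g h
      rcases hval g with hg | hg <;> rcases hval h with hh | hh
      · exact habN g h hg hh
      · exact (key2 h hh g hg).symm
      · exact key2 g hg h hh
      · have hp : σ (a⁻¹ * g) = 1 := by rw [hhom, hσinv a, ha, hg]; norm_num
        have hq : σ (a⁻¹ * h) = 1 := by rw [hhom, hσinv a, ha, hh]; norm_num
        calc g * h = (a * (a⁻¹ * g)) * (a * (a⁻¹ * h)) := by group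
          _ = a * ((a⁻¹ * g) * a) * (a⁻¹ * h) := by group
          _ = a * (a * (a⁻¹ * g)) * (a⁻¹ * h) := by rw [← hcomm (a⁻¹ * g) hp]
          _ = (a * a) * ((a⁻¹ * g) * (a⁻¹ * h)) := by group
          _ = (a * a) * ((a⁻¹ * h) * (a⁻¹ * g)) := by rw [habN (a⁻¹ * g) (a⁻¹ * h) hp hq]
          _ = a * (a * (a⁻¹ * h)) * (a⁻¹ * g) := by group
          _ = a * ((a⁻¹ * h) * a) * (a⁻¹ * g) := by rw [hcomm (a⁻¹ * h) hq]
          _ = (a * (a⁻¹ * h)) * (a * (a⁻¹ * g)) := by group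
          _ = h * g := by group
    exact hg0 (hall g0 h0)
  refine ⟨stfix, ?_⟩
  intro n a hn ha
  have ha' : st a = a := stfix a ha
  constructor
  · have h1 : σ (n * a) = -1 := by rw [hhom, hn, ha, one_mul]
    have h2' := stfix (n * a) h1
    rw [hanti, ha'] at h2'
    have h3 : st n = a⁻¹ * (n * a) := by rw [← h2']; group
    rw [h3]; group
  · have h1 : σ (a * n) = -1 := by rw [hhom, hn, ha, mul_one]
    have h2' := stfix (a * n) h1
    rw [hanti, ha'] at h2'
    have h3 : st n = (a * n) * a⁻¹ := by rw [← h2']; group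
    exact h3
end

section
/- Let F be a field with char(F) ≠ 2, G a non-abelian group with non-trivial orientation σ and involution *, N = ker(σ) abelian, and suppose x* = x for all x ∈ G \ N while n* = a⁻¹na for all n ∈ N and a ∈ G \ N. Then FG is normal with respect to the oriented involution ⊛: αα⊛ = α⊛α for all α ∈ FG. -/
theorem stmt_15 {F G : Type*} [Field F] [Group G] (h2 : (2 : F) ≠ 0)
    (hna : ∃ g h : G, g * h ≠ h * g)
    (st : G → G) (hanti : ∀ g h : G, st (g * h) = st h * st g)
    (hinvol : ∀ g : G, st (st g) = g)
    (σ : G → F) (hhom : ∀ g h : G, σ (g * h) = σ g * σ h)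
    (hval : ∀ g : G, σ g = 1 ∨ σ g = -1)
    (hnt : ∃ g : G, σ g = -1)
    (habN : ∀ m n : G, σ m = 1 → σ n = 1 → m * n = n * m)
    (hstX : ∀ x : G, σ x = -1 → st x = x)
    (hstN : ∀ n a : G, σ n = 1 → σ a = -1 → st n = a⁻¹ * n * a) :
    ∀ α : MonoidAlgebra F G, α * oinvMap st σ α = oinvMap st σ α * α := by
  obtain ⟨a, ha⟩ := hnt
  set D : MonoidAlgebra F G → MonoidAlgebra F G := oinvMap st σ with hD
  have h1 : σ 1 = 1 := by
    rcases hval 1 with h | h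
    · exact h
    · exfalso
      have := hhom 1 1
      rw [one_mul, h] at this
      exact h2 (by linear_combination -this)
  have hinvσ : ∀ g : G, σ g⁻¹ = σ g := by
    intro g
    have hgg := hhom g g⁻¹
    rw [mul_inv_cancel, h1] at hgg
    rcases hval g with h | h <;> rw [h] at hgg ⊢
    · linear_combination -hgg
    · linear_combination hgg
  have Dzero : D 0 = 0 := by
    show MonoidAlgebra.ofCoeff (Finsupp.sum (0 : MonoidAlgebra F G).coeff fun g c => Finsupp.single (st g) (σ g * c)) = 0
    rw [MonoidAlgebra.coeff_zero, Finsupp.sum_zero_index]; rfl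
  have Dsingle : ∀ (h : G) (d : F),
      D (MonoidAlgebra.single h d) = MonoidAlgebra.single (st h) (σ h * d) := by
    intro h d
    show MonoidAlgebra.ofCoeff (Finsupp.sum (MonoidAlgebra.single h d).coeff fun g c => Finsupp.single (st g) (σ g * c)) = _
    rw [MonoidAlgebra.coeff_single, Finsupp.sum_single_index (by simp)]; rfl
  have Dadd : ∀ f g : MonoidAlgebra F G, D (f + g) = D f + D g := by
    intro f g
    show MonoidAlgebra.ofCoeff (Finsupp.sum (f + g).coeff fun g c => Finsupp.single (st g) (σ g * c)) =
      MonoidAlgebra.ofCoeff (Finsupp.sum f.coeff fun g c => Finsupp.single (st g) (σ g * c)) +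
      MonoidAlgebra.ofCoeff (Finsupp.sum g.coeff fun g c => Finsupp.single (st g) (σ g * c))
    rw [MonoidAlgebra.coeff_add, Finsupp.sum_add_index' (fun x => by simp)
      (fun x c d => by rw [mul_add, Finsupp.single_add])]; rfl
  have key : ∀ (g h : G) (c d : F),
      MonoidAlgebra.single g c * D (MonoidAlgebra.single h d) +
        MonoidAlgebra.single h d * D (MonoidAlgebra.single g c) =
      D (MonoidAlgebra.single h d) * MonoidAlgebra.single g c +
        D (MonoidAlgebra.single g c) * MonoidAlgebra.single h d := by
    intro g h c d
    rw [Dsingle, Dsingle, MonoidAlgebra.single_mul_single, MonoidAlgebra.single_mul_single,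
      MonoidAlgebra.single_mul_single, MonoidAlgebra.single_mul_single]
    rcases hval g with hg | hg <;> rcases hval h with hh | hh
    · -- both in N
      have hsth : σ (st h) = 1 := by
        rw [hstN h a hh ha, hhom, hhom, hinvσ, ha, hh]; ring
      have hstg : σ (st g) = 1 := by
        rw [hstN g a hg ha, hhom, hhom, hinvσ, ha, hg]; ring
      rw [habN g (st h) hg hsth, habN h (st g) hh hstg,
        show c * (σ h * d) = σ h * d * c by ring,
        show d * (σ g * c) = σ g * c * d by ring]
    · -- g ∈ N, h ∉ N
      have e1 : st h = h := hstX h hh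
      have e2 : h * st g = g * h := by
        rw [hstN g h hg hh]; group
      have e3 : st g * h = h * g := by
        have := hstN g h⁻¹ hg (by rw [hinvσ]; exact hh)
        rw [this]; group
      rw [e1, e2, e3, ← MonoidAlgebra.single_add, ← MonoidAlgebra.single_add, hg, hh,
        show c * (-1 * d) + d * (1 * c) = (0:F) by ring,
        show -1 * d * c + 1 * c * d = (0:F) by ring]
      simp
    · -- g ∉ N, h ∈ N
      have e1 : st g = g := hstX g hg
      have e2 : g * st h = h * g := by
        rw [hstN h g hh hg]; group
      have e3 : st h * g = g * h := by
        have := hstN h g⁻¹ hh (by rw [hinvσ]; exact hg)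
        rw [this]; group
      rw [e1, e2, e3, hg, hh, ← MonoidAlgebra.single_add, ← MonoidAlgebra.single_add,
        show c * (1 * d) + d * (-1 * c) = (0:F) by ring,
        show 1 * d * c + -1 * c * d = (0:F) by ring]
      simp
    · -- both ∉ N
      rw [hstX g hg, hstX h hh, hg, hh, add_comm (MonoidAlgebra.single (h * g) _),
        show c * (-1 * d) = -1 * c * d by ring,
        show d * (-1 * c) = -1 * d * c by ring]
  have H : ∀ α β : MonoidAlgebra F G,
      α * D β + β * D α = D β * α + D α * β := by
    intro α β
    induction α using MonoidAlgebra.induction_linear with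
    | zero => simp [Dzero]
    | add f f' hf hf' =>
      simp only [Dadd, add_mul, mul_add]
      rw [add_add_add_comm, hf, hf', add_add_add_comm]
    | single g c =>
      induction β using MonoidAlgebra.induction_linear with
      | zero => simp [Dzero]
      | add f f' hf hf' =>
        simp only [Dadd, add_mul, mul_add]
        rw [add_add_add_comm, hf, hf', add_add_add_comm]
      | single h d => exact key g h c d
  intro α
  have hH := H α α
  have h2s : (2 : F) • (α * D α) = (2 : F) • (D α * α) := by
    rw [two_smul, two_smul]; exact hH
  exact smul_right_injective (MonoidAlgebra F G) h2 h2s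
end

section
/- Let F be a field with char(F) ≠ 2 and G a non-abelian group with an LC index-2 subgroup N = ker(σ) and unique non-identity commutator s, such that there exists a central element g₀ ∈ G \ N with g₀* = sg₀, and * acts by g* = g for g ∈ N ∩ ζ(G) or g ∈ (G\N)\ζ(G), and g* = sg otherwise. Then FG is normal with respect to the oriented involution ⊛. -/
theorem stmt_18 {F G : Type*} [Field F] [Group G] (h2 : (2 : F) ≠ 0)
    (hna : ∃ g h : G, g * h ≠ h * g)
    (st : G → G) (hanti : ∀ g h : G, st (g * h) = st h * st g)
    (hinvol : ∀ g : G, st (st g) = g)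
    (σ : G → F) (hhom : ∀ g h : G, σ (g * h) = σ g * σ h)
    (hval : ∀ g : G, σ g = 1 ∨ σ g = -1)
    (hnt : ∃ g : G, σ g = -1)
    (s : G) (hsN : σ s = 1) (hs1 : s ≠ 1) (hs2 : s * s = 1)
    (hsc : s ∈ Subgroup.center G)
    (hGLC : ∀ g h : G, g * h = h * g ↔
      (g ∈ Subgroup.center G ∨ h ∈ Subgroup.center G ∨ g * h ∈ Subgroup.center G))
    (hcomm : ∀ g h : G, g⁻¹ * h⁻¹ * g * h = 1 ∨ g⁻¹ * h⁻¹ * g * h = s)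
    (hNna : ∃ m n : G, σ m = 1 ∧ σ n = 1 ∧ m * n ≠ n * m)
    (hNLC : ∀ m n : G, σ m = 1 → σ n = 1 → (m * n = n * m ↔
      ((∀ k : G, σ k = 1 → m * k = k * m) ∨ (∀ k : G, σ k = 1 → n * k = k * n) ∨
        (∀ k : G, σ k = 1 → (m * n) * k = k * (m * n)))))
    (g₀ : G) (hg₀ : σ g₀ = -1) (hg₀c : g₀ ∈ Subgroup.center G) (hg₀s : st g₀ = s * g₀)
    (hst1 : ∀ g : G,
      ((σ g = 1 ∧ g ∈ Subgroup.center G) ∨ (σ g = -1 ∧ g ∉ Subgroup.center G)) → st g = g)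
    (hst2 : ∀ g : G,
      ¬((σ g = 1 ∧ g ∈ Subgroup.center G) ∨ (σ g = -1 ∧ g ∉ Subgroup.center G)) →
        st g = s * g) :
    ∀ α : MonoidAlgebra F G, α * oinvMap st σ α = oinvMap st σ α * α := by
  classical
  have h1ne : (1 : F) ≠ -1 := by
    intro h
    apply h2
    linear_combination h
  have hsc' : ∀ b : G, b * s = s * b := fun b => Subgroup.mem_center_iff.mp hsc b
  -- key: each `single g c + single (st g) (σ g * c)` commutes with every single
  have key : ∀ (g : G) (c : F) (h : G) (d : F),
      MonoidAlgebra.single h d *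
          (MonoidAlgebra.single g c + MonoidAlgebra.single (st g) (σ g * c)) =
        (MonoidAlgebra.single g c + MonoidAlgebra.single (st g) (σ g * c)) *
          MonoidAlgebra.single h d := by
    intro g c h d
    by_cases hgc : g ∈ Subgroup.center G
    · have hstc : st g ∈ Subgroup.center G := by
        by_cases hcond : ((σ g = 1 ∧ g ∈ Subgroup.center G) ∨
            (σ g = -1 ∧ g ∉ Subgroup.center G))
        · rw [hst1 g hcond]; exact hgc
        · rw [hst2 g hcond]; exact Subgroup.mul_mem _ hsc hgc
      simp only [mul_add, add_mul, MonoidAlgebra.single_mul_single]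
      rw [Subgroup.mem_center_iff.mp hgc h, Subgroup.mem_center_iff.mp hstc h,
        mul_comm d c, mul_comm d (σ g * c)]
    · rcases hval g with hσ | hσ
      · have hstg : st g = s * g := by
          apply hst2
          rintro (⟨_, hc⟩ | ⟨hm, _⟩)
          · exact hgc hc
          · rw [hσ] at hm; exact h1ne hm
        by_cases hch : h * g = g * h
        · have E2 : h * (s * g) = s * g * h := by
            calc h * (s * g) = h * s * g := (mul_assoc _ _ _).symm
              _ = s * h * g := by rw [hsc' h]
              _ = s * (h * g) := mul_assoc _ _ _
              _ = s * (g * h) := by rw [hch]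
              _ = s * g * h := (mul_assoc _ _ _).symm
          simp only [mul_add, add_mul, MonoidAlgebra.single_mul_single, hstg]
          rw [hch, E2, mul_comm d c, mul_comm d (σ g * c)]
        · have e0 : h * g * s = g * h := by
            have e' : h * g * (g⁻¹ * h⁻¹ * g * h) = g * h := by group
            rcases hcomm g h with e | e
            · exfalso; apply hch; rw [e, mul_one] at e'; exact e'
            · rw [e] at e'; exact e'
          have E1 : s * g * h = h * g := by
            calc s * g * h = s * (g * h) := mul_assoc _ _ _
              _ = s * (h * g * s) := by rw [e0]
              _ = h * g * s * s := (hsc' _).symm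
              _ = h * g * (s * s) := mul_assoc _ _ _
              _ = h * g := by rw [hs2, mul_one]
          have E2 : h * (s * g) = g * h := by
            calc h * (s * g) = h * s * g := (mul_assoc _ _ _).symm
              _ = s * h * g := by rw [hsc' h]
              _ = s * (h * g) := mul_assoc _ _ _
              _ = h * g * s := (hsc' _).symm
              _ = g * h := e0
          simp only [mul_add, add_mul, MonoidAlgebra.single_mul_single, hstg, hσ, one_mul]
          rw [E1, E2, mul_comm d c]
          exact add_comm (MonoidAlgebra.single (h*g) (c*d)) (MonoidAlgebra.single (g*h) (c*d))
      · have hstg : st g = g := hst1 g (Or.inr ⟨hσ, hgc⟩)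
        have hz0 : MonoidAlgebra.single g c + MonoidAlgebra.single (st g) (σ g * c) = 0 := by
          rw [hstg, hσ, ← MonoidAlgebra.single_add]
          norm_num
        rw [hz0, mul_zero, zero_mul]
  have expand : ∀ β : MonoidAlgebra F G,
      β = ∑ x ∈ β.coeff.support, MonoidAlgebra.single x (β.coeff x) := by
    intro β
    conv_lhs => rw [← MonoidAlgebra.sum_coeff_single β]
    rfl
  have keyAll : ∀ (g : G) (c : F) (β : MonoidAlgebra F G),
      β * (MonoidAlgebra.single g c + MonoidAlgebra.single (st g) (σ g * c)) =
        (MonoidAlgebra.single g c + MonoidAlgebra.single (st g) (σ g * c)) * β := by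
    intro g c β
    rw [expand β, Finset.sum_mul, Finset.mul_sum]
    exact Finset.sum_congr rfl fun x _ => key g c x (β.coeff x)
  intro α
  have hoi : oinvMap st σ α = ∑ x ∈ α.coeff.support, MonoidAlgebra.single (st x) (σ x * α.coeff x) :=
    MonoidAlgebra.ofCoeff_finsuppSum _ _
  have hw : α + oinvMap st σ α = ∑ x ∈ α.coeff.support,
      (MonoidAlgebra.single x (α.coeff x) + MonoidAlgebra.single (st x) (σ x * α.coeff x)) := by
    rw [Finset.sum_add_distrib]
    exact congrArg₂ (· + ·) (expand α) hoi
  have hcw : α * (α + oinvMap st σ α) = (α + oinvMap st σ α) * α := by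
    rw [hw, Finset.mul_sum, Finset.sum_mul]
    exact Finset.sum_congr rfl fun x _ => keyAll x (α.coeff x) α
  rw [mul_add, add_mul] at hcw
  exact add_left_cancel hcw
end
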